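/- For every m ∈ ℕ and every y ∈ ℝ, ∫_ℝ t^m e^{−t²/2} e^{i y t} dt = √(2π) · i^m · He_m(y) · e^{−y²/2}, where He_m is the m-th probabilists' Hermite polynomial. -/

import Mathlib

open MeasureTheory Complex Polynomial
open scoped Real

private lemma gauss_norm_aux (k : ℕ) (x t : ℝ) :
    ‖(t : ℂ) ^ k * Complex.exp (-(t : ℂ) ^ 2 / 2) * Complex.exp (Complex.I * x * t)‖
      = |t| ^ k * Real.exp (-(1/2) * t ^ 2) := by
  have h1 : (-(t : ℂ) ^ 2 / 2) = ((-(1/2) * t ^ 2 : ℝ) : ℂ) := by push_cast; ring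
  rw [norm_mul, norm_mul, norm_pow, h1]
  have h2 : ‖Complex.exp ((-(1/2) * t ^ 2 : ℝ) : ℂ)‖ = Real.exp (-(1/2) * t ^ 2) := by
    rw [Complex.norm_exp, Complex.ofReal_re]
  have h3 : ‖Complex.exp (Complex.I * x * t)‖ = 1 := by
    rw [Complex.norm_exp]
    norm_num [Complex.mul_re]
  rw [h2, h3, Complex.norm_real, Real.norm_eq_abs, mul_one]

private lemma gauss_int_aux (n : ℕ) :
    Integrable (fun x : ℝ => |x| ^ n * Real.exp (-(1/2) * x ^ 2)) := by
  have h1 : Integrable (fun x : ℝ =>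
      Real.exp (-(1/2) * x ^ 2) + (4 ^ n * n.factorial) * Real.exp (-(1/4) * x ^ 2)) :=
    (integrable_exp_neg_mul_sq (by norm_num)).add
      ((integrable_exp_neg_mul_sq (by norm_num)).const_mul _)
  refine h1.mono' (Continuous.aestronglyMeasurable (by continuity)) ?_
  filter_upwards with x
  rw [Real.norm_eq_abs, _root_.abs_of_nonneg (by positivity)]
  rcases le_total (|x|) 1 with h | h
  · have h0 : |x| ^ n ≤ 1 := pow_le_one₀ (abs_nonneg x) h
    have := Real.exp_pos (-(1/2) * x ^ 2)
    nlinarith [Real.exp_pos (-(1/4) * x ^ 2),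
      mul_nonneg (by positivity : (0:ℝ) ≤ (4:ℝ) ^ n * n.factorial)
        (Real.exp_pos (-(1/4) * x ^ 2)).le]
  · have h2 : |x| ^ n ≤ |x| ^ (2 * n) := pow_le_pow_right₀ h (by omega)
    have h3 : |x| ^ (2 * n) = 4 ^ n * (x ^ 2 / 4) ^ n := by
      rw [pow_mul, _root_.sq_abs, div_pow, mul_div_cancel₀]
      positivity
    have h4 : (x ^ 2 / 4) ^ n ≤ n.factorial * Real.exp (x ^ 2 / 4) := by
      have h5 := Real.pow_div_factorial_le_exp (x := x ^ 2 / 4) (by positivity) n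
      have h6 : (0:ℝ) < n.factorial := by positivity
      rw [div_le_iff₀ h6] at h5
      linarith [h5]
    have h7 : Real.exp (x ^ 2 / 4) * Real.exp (-(1/2) * x ^ 2) = Real.exp (-(1/4) * x ^ 2) := by
      rw [← Real.exp_add]; ring_nf
    have hE := (Real.exp_pos (-(1/2) * x ^ 2)).le
    calc |x| ^ n * Real.exp (-(1/2) * x ^ 2)
        ≤ (4 ^ n * (n.factorial * Real.exp (x ^ 2 / 4))) * Real.exp (-(1/2) * x ^ 2) := by
          apply mul_le_mul_of_nonneg_right _ hE
          calc |x| ^ n ≤ |x| ^ (2*n) := h2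
            _ = 4 ^ n * (x ^ 2 / 4) ^ n := h3
            _ ≤ 4 ^ n * (n.factorial * Real.exp (x ^ 2 / 4)) := by
                apply mul_le_mul_of_nonneg_left h4 (by positivity)
      _ = (4 ^ n * n.factorial) * Real.exp (-(1/4) * x ^ 2) := by
          rw [← h7]; ring
      _ ≤ _ := le_add_of_nonneg_left (Real.exp_pos _).le

private lemma gauss_integrable_aux (k : ℕ) (x : ℝ) :
    Integrable (fun t : ℝ => (t : ℂ) ^ k * Complex.exp (-(t : ℂ) ^ 2 / 2)
      * Complex.exp (Complex.I * x * t)) := by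
  refine (gauss_int_aux k).mono' (Continuous.aestronglyMeasurable (by continuity)) ?_
  filter_upwards with t
  rw [gauss_norm_aux]

private lemma gauss_hasDerivAt_aux (m : ℕ) (y : ℝ) :
    HasDerivAt (fun y : ℝ => ∫ t : ℝ, (t : ℂ) ^ m * Complex.exp (-(t : ℂ) ^ 2 / 2)
        * Complex.exp (Complex.I * y * t))
      (∫ t : ℝ, Complex.I * ((t : ℂ) ^ (m+1) * Complex.exp (-(t : ℂ) ^ 2 / 2)
        * Complex.exp (Complex.I * y * t))) y := by
  have key := hasDerivAt_integral_of_dominated_loc_of_deriv_le (μ := (volume : Measure ℝ))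
    (F := fun (x : ℝ) (t : ℝ) => (t : ℂ) ^ m * Complex.exp (-(t : ℂ) ^ 2 / 2)
        * Complex.exp (Complex.I * x * t))
    (F' := fun (x : ℝ) (t : ℝ) => Complex.I * ((t : ℂ) ^ (m+1) * Complex.exp (-(t : ℂ) ^ 2 / 2)
        * Complex.exp (Complex.I * x * t)))
    (x₀ := y) (bound := fun t => |t| ^ (m+1) * Real.exp (-(1/2) * t ^ 2))
    (s := Metric.ball y 1) (Metric.ball_mem_nhds y one_pos)
    (Filter.Eventually.of_forall fun x =>
      Continuous.aestronglyMeasurable (by continuity))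
    (gauss_integrable_aux m y)
    (Continuous.aestronglyMeasurable (by continuity))
    ?_ (gauss_int_aux (m+1)) ?_
  · exact key.2
  · filter_upwards with t x _
    rw [norm_mul, Complex.norm_I, one_mul, gauss_norm_aux]
  · filter_upwards with t x _
    have h1 : HasDerivAt (fun z : ℂ => Complex.I * z * (t : ℂ)) (Complex.I * t) (x : ℂ) := by
      simpa using ((hasDerivAt_id ((x : ℝ) : ℂ)).const_mul Complex.I).mul_const (t : ℂ)
    have h2 := ((h1.cexp.comp_ofReal).const_mul
      ((t : ℂ) ^ m * Complex.exp (-(t : ℂ) ^ 2 / 2)))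
    refine h2.congr_deriv ?_
    ring

theorem integral_monomial_gaussian_fourier (m : ℕ) (y : ℝ) :
    ∫ t : ℝ, (t : ℂ) ^ m * Complex.exp (-(t : ℂ) ^ 2 / 2) * Complex.exp (Complex.I * y * t)
      = (Real.sqrt (2 * Real.pi) : ℂ) * Complex.I ^ m
        * ((Polynomial.aeval y (Polynomial.hermite m) : ℝ) : ℂ)
        * Complex.exp (-(y : ℂ) ^ 2 / 2) := by
  induction m generalizing y with
  | zero =>
      have h0 : ∀ t : ℝ, (t : ℂ) ^ 0 * Complex.exp (-(t : ℂ) ^ 2 / 2)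
          * Complex.exp (Complex.I * y * t)
          = Complex.exp (Complex.I * (y : ℂ) * t) * Complex.exp (-(1/2 : ℂ) * t ^ 2) := by
        intro t
        rw [pow_zero, one_mul, mul_comm]
        congr 2
        ring
      simp_rw [h0]
      rw [fourierIntegral_gaussian (by norm_num : (0:ℝ) < ((1:ℂ)/2).re) ((y : ℝ) : ℂ)]
      have hC : ((Real.sqrt (2 * Real.pi) : ℝ) : ℂ) = ((Real.pi : ℂ) / (1/2)) ^ (1/2 : ℂ) := by
        rw [Real.sqrt_eq_rpow, Complex.ofReal_cpow (by positivity)]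
        have h9 : ((Real.pi : ℂ) / (1/2)) = ((2 * Real.pi : ℝ) : ℂ) := by push_cast; ring
        rw [h9]
        norm_num
      rw [hermite_zero]
      simp only [map_one, pow_zero, Complex.ofReal_one, mul_one, one_mul]
      rw [hC]
      congr 2
      ring
  | succ m ih =>
      set C : ℂ := ((Real.sqrt (2 * Real.pi) : ℝ) : ℂ) with hCdef
      have hd := gauss_hasDerivAt_aux m y
      have heq : (fun y : ℝ => ∫ t : ℝ, (t : ℂ) ^ m * Complex.exp (-(t : ℂ) ^ 2 / 2)
          * Complex.exp (Complex.I * y * t))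
          = fun y : ℝ => C * Complex.I ^ m * ((Polynomial.aeval y (Polynomial.hermite m) : ℝ) : ℂ)
            * Complex.exp (-(y : ℂ) ^ 2 / 2) := funext fun y => ih y
      rw [heq] at hd
      -- derivative of RHS
      have hP : HasDerivAt (fun y : ℝ => ((Polynomial.aeval y (Polynomial.hermite m) : ℝ) : ℂ))
          (((Polynomial.aeval y (Polynomial.derivative (Polynomial.hermite m)) : ℝ) : ℂ)) y :=
        (Polynomial.hasDerivAt_aeval (q := Polynomial.hermite m) y).ofReal_comp
      have hg : HasDerivAt (fun y : ℝ => Complex.exp (-(y : ℂ) ^ 2 / 2))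
          (-(y : ℂ) * Complex.exp (-(y : ℂ) ^ 2 / 2)) y := by
        have h1 : HasDerivAt (fun z : ℂ => -z ^ 2 / 2) (-(y : ℂ)) ((y : ℝ) : ℂ) := by
          have := ((hasDerivAt_pow 2 ((y : ℝ) : ℂ)).neg).div_const 2
          refine this.congr_deriv ?_
          norm_num
          ring
        have := (h1.cexp).comp_ofReal
        convert this using 1
        ring
      have h1 : HasDerivAt (fun y : ℝ => C * Complex.I ^ m
          * ((Polynomial.aeval y (Polynomial.hermite m) : ℝ) : ℂ))
          (C * Complex.I ^ m
            * ((Polynomial.aeval y (Polynomial.derivative (Polynomial.hermite m)) : ℝ) : ℂ)) y :=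
        hP.const_mul _
      have hRHS := h1.mul hg
      have huniq := hd.unique hRHS
      have hpull : (∫ t : ℝ, Complex.I * ((t : ℂ) ^ (m+1) * Complex.exp (-(t : ℂ) ^ 2 / 2)
          * Complex.exp (Complex.I * y * t)))
          = Complex.I * ∫ t : ℝ, (t : ℂ) ^ (m+1) * Complex.exp (-(t : ℂ) ^ 2 / 2)
            * Complex.exp (Complex.I * y * t) := integral_const_mul _ _
      rw [hpull] at huniq
      have hsolve : (∫ t : ℝ, (t : ℂ) ^ (m+1) * Complex.exp (-(t : ℂ) ^ 2 / 2)
          * Complex.exp (Complex.I * y * t))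
          = -Complex.I * (C * Complex.I ^ m
            * ((Polynomial.aeval y (Polynomial.derivative (Polynomial.hermite m)) : ℝ) : ℂ)
            * Complex.exp (-(y : ℂ) ^ 2 / 2)
            + C * Complex.I ^ m * ((Polynomial.aeval y (Polynomial.hermite m) : ℝ) : ℂ)
            * (-(y : ℂ) * Complex.exp (-(y : ℂ) ^ 2 / 2))) := by
        have h2 : -Complex.I * (Complex.I * (∫ t : ℝ, (t : ℂ) ^ (m+1)
            * Complex.exp (-(t : ℂ) ^ 2 / 2) * Complex.exp (Complex.I * y * t)))
            = ∫ t : ℝ, (t : ℂ) ^ (m+1) * Complex.exp (-(t : ℂ) ^ 2 / 2)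
              * Complex.exp (Complex.I * y * t) := by
          rw [← mul_assoc]
          simp [Complex.I_mul_I]
        rw [← h2, huniq]
      rw [hsolve, hermite_succ]
      have hcast : ((Polynomial.aeval y (Polynomial.X * Polynomial.hermite m
          - Polynomial.derivative (Polynomial.hermite m)) : ℝ) : ℂ)
          = (y : ℂ) * ((Polynomial.aeval y (Polynomial.hermite m) : ℝ) : ℂ)
            - ((Polynomial.aeval y (Polynomial.derivative (Polynomial.hermite m)) : ℝ) : ℂ) := by
        push_cast [map_sub, map_mul, Polynomial.aeval_X]
        ring
      rw [hcast]
      ring
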